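/- Let M > 0, μ > 0, m be a nonzero integer, l an integer with l ≥ |m|, and n a natural number. Set α := m/(μM) and β := 6 − l(l+1)/(μ²M²), and assume 4 < α² < 6 and 4/100 < β < 165/100. Then there exists a₀ ∈ (0, M) such that for every a ∈ (a₀, M), the polynomial p has a root in U_1(0) ∩ {w ∈ ℂ : Im w < 0}. -/

import Mathlib

set_option maxHeartbeats 1600000


/-- The quartic `p(w)` from the paper, depending on the parameters
`M, a, μ` (reals), `m, l` (integers) and `n` (a natural number). -/
noncomputable def p (M a μ : ℝ) (m l : ℤ) (n : ℕ) (w : ℂ) : ℂ :=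
  w ^ 4
    + (((m * a / M : ℝ) : ℂ) - Complex.I * (((2 * n + 1 : ℝ) * Real.sqrt (1 - a ^ 2 / M ^ 2) : ℝ) : ℂ))
        / ((μ * M : ℝ) : ℂ) * (w * (w ^ 2 - 1))
    + (((2 - (l * (l + 1) : ℤ) / (μ ^ 2 * M ^ 2) : ℝ)) : ℂ) * w ^ 2
    + 3 + ((2 * Real.sqrt (1 - a ^ 2 / M ^ 2) : ℝ) : ℂ)


/-- positivity of the limit quartic on [-1,1] -/
lemma qpos (α β w : ℝ) (h1 : 2 < α) (h2 : α^2 < 6) (hb1 : 1/25 < β) (hb2 : β < 33/20)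
    (hw1 : -1 ≤ w) (hw2 : w ≤ 1) :
    0 < w^4 + α*w^3 + (β-4)*w^2 - α*w + 3 := by
  rcases le_or_gt w 0 with hw | hw
  · rcases hw.lt_or_eq with h0 | h0
    · have hA : 0 < α * (-w) := mul_pos (by linarith) (by linarith)
      have hw2' : w^2 ≤ 1 := by nlinarith
      have hterm : 0 ≤ (1 - w^2) * (3 - w^2 - α*w) :=
        mul_nonneg (by nlinarith) (by nlinarith)
      have hbw : 0 < β * w^2 := mul_pos (by linarith) (by nlinarith)
      nlinarith [hterm, hbw]
    · rw [h0]; norm_num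
  · have hα49 : α < 49/20 := by nlinarith
    have h1w : (0:ℝ) ≤ 1 - w^2 := by nlinarith
    have hG : (1 - w^2) * (w^2 + (49/20)*w - 3) ≤ (1/25) * w^2 := by
      rcases le_or_gt w (4/5) with h45 | h45
      · nlinarith [mul_nonneg h1w (by nlinarith : (0:ℝ) ≤ 3 - w^2 - (49/20)*w)]
      · nlinarith [sq_nonneg (761/810 - w),
          mul_nonneg (sq_nonneg (1 - w)) (by linarith : (0:ℝ) ≤ w - 4/5),
          sq_nonneg ((1 - w)^2)]
    have hmono : (1 - w^2) * (w^2 + α*w - 3) ≤ (1 - w^2) * (w^2 + (49/20)*w - 3) := by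
      nlinarith [mul_nonneg (mul_nonneg h1w hw.le) (by linarith : (0:ℝ) ≤ 49/20 - α)]
    nlinarith [mul_pos (by linarith : (0:ℝ) < β - 1/25) (mul_pos hw hw)]

lemma exists_root_pos (α β : ℝ) (h1 : 2 < α) (h2 : α^2 < 6)
    (hb1 : 1/25 < β) (hb2 : β < 33/20) :
    ∃ x y : ℝ, y < 0 ∧ x^2 + y^2 < 1 ∧
      ((x:ℂ) + (y:ℂ)*Complex.I)^4 + (α:ℂ)*((x:ℂ) + (y:ℂ)*Complex.I)^3
        + ((β:ℂ)-4)*((x:ℂ) + (y:ℂ)*Complex.I)^2 - (α:ℂ)*((x:ℂ) + (y:ℂ)*Complex.I) + 3 = 0 := by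
  have hα49 : α < 49/20 := by nlinarith
  set f : ℝ → ℝ := fun w => w^4 + α*w^3 + (β-4)*w^2 - α*w + 3 with hf
  have hfc : Continuous f := by fun_prop
  have hs3 : Real.sqrt 3 ^ 2 = 3 := Real.sq_sqrt (by norm_num)
  have hs3a : (1.7:ℝ) < Real.sqrt 3 := by
    nlinarith [Real.sqrt_nonneg 3, hs3]
  have hs3b : Real.sqrt 3 < 1.8 := by
    nlinarith [Real.sqrt_nonneg 3, hs3]
  -- first real root r₁ ∈ (-√3, -1)
  have hneg : f (-Real.sqrt 3) < 0 := by
    show (-Real.sqrt 3)^4 + α*(-Real.sqrt 3)^3 + (β-4)*(-Real.sqrt 3)^2 - α*(-Real.sqrt 3) + 3 < 0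
    have e1 : (-Real.sqrt 3)^4 = 9 := by nlinarith [hs3]
    have e2 : (-Real.sqrt 3)^3 = -(3*Real.sqrt 3) := by nlinarith [hs3]
    have e3 : (-Real.sqrt 3)^2 = 3 := by nlinarith [hs3]
    rw [e1, e2, e3]
    nlinarith [hs3a, hs3b]
  have hpos1 : 0 < f (-1) := by
    show 0 < (-1:ℝ)^4 + α*(-1)^3 + (β-4)*(-1)^2 - α*(-1) + 3
    norm_num; linarith
  have hmem : (0:ℝ) ∈ Set.Ioo (f (-Real.sqrt 3)) (f (-1)) := ⟨hneg, hpos1⟩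
  have hsub := intermediate_value_Ioo (by nlinarith : -Real.sqrt 3 ≤ -1) hfc.continuousOn
  obtain ⟨r₁, hr₁mem, hr₁⟩ := hsub hmem
  obtain ⟨hr₁l, hr₁u⟩ := hr₁mem
  have hr₁0 : r₁ < 0 := by linarith
  have hr₁sq : r₁^2 < 3 := by nlinarith
  -- f (3/r₁) < 0
  have hr₁ne : r₁ ≠ 0 := ne_of_lt hr₁0
  have key : f (3/r₁) * r₁^4 = -6*(r₁^2-3)*(r₁^2+2*α*r₁+3) := by
    have h3 : (3/r₁)*r₁ = 3 := by field_simp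
    have expand : f (3/r₁) * r₁^4
        = ((3/r₁)*r₁)^4 + α*((3/r₁)*r₁)^3*r₁ + (β-4)*((3/r₁)*r₁)^2*r₁^2
          - α*((3/r₁)*r₁)*r₁^3 + 3*r₁^4 := by
      show (_^4 + α*_^3 + (β-4)*_^2 - α*_ + 3) * r₁^4 = _
      ring
    rw [expand, h3]
    have hfr : r₁^4 + α*r₁^3 + (β-4)*r₁^2 - α*r₁ + 3 = 0 := hr₁
    linear_combination 9*hfr
  have hquad : r₁^2 + 2*α*r₁ + 3 < 0 := by
    nlinarith [mul_pos (by linarith : (0:ℝ) < -(r₁+1)) (by linarith : (0:ℝ) < r₁+3),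
      mul_pos (by linarith : (0:ℝ) < α - 2) (by linarith : (0:ℝ) < -r₁)]
  have hr₁4 : 0 < r₁^4 := by positivity
  have hneg2 : f (3/r₁) < 0 := by
    have : f (3/r₁) * r₁^4 < 0 := by
      rw [key]; nlinarith [hr₁sq, hquad]
    by_contra hcon
    push_neg at hcon
    exact absurd (mul_nonneg hcon hr₁4.le) (not_le.2 this)
  have hpos2 : 0 < f (-10) := by
    show 0 < (-10:ℝ)^4 + α*(-10)^3 + (β-4)*(-10)^2 - α*(-10) + 3
    norm_num
    nlinarith
  have h10 : (-10:ℝ) < 3/r₁ := by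
    rw [lt_div_iff_of_neg hr₁0]; nlinarith
  have hsub2 := intermediate_value_Ioo' (le_of_lt h10) hfc.continuousOn
  obtain ⟨r₂, hr₂mem, hr₂⟩ := hsub2 (⟨hneg2, hpos2⟩ : (0:ℝ) ∈ Set.Ioo (f (3/r₁)) (f (-10)))
  obtain ⟨hr₂l, hr₂u⟩ := hr₂mem
  -- r₁ r₂ > 3
  have h3r₁ : 3/r₁ < r₁ := by
    rw [div_lt_iff_of_neg hr₁0]; nlinarith
  have hne : r₁ ≠ r₂ := by intro h; rw [← h] at hr₂u; linarith
  have hprod : 3 < r₁ * r₂ := by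
    have h1' : r₁ * (3/r₁) = 3 := by field_simp
    nlinarith [mul_lt_mul_of_neg_left hr₂u hr₁0]
  have hfr₁ : r₁^4 + α*r₁^3 + (β-4)*r₁^2 - α*r₁ + 3 = 0 := hr₁
  have hfr₂ : r₂^4 + α*r₂^3 + (β-4)*r₂^2 - α*r₂ + 3 = 0 := hr₂
  -- quadratic factor coefficients
  clear hsub hsub2 hmem key hneg hneg2 hpos1 hpos2 h10 h3r₁ hfc hs3 hs3a hs3b hquad hr₁4 hr₂l hr₂u hr₁sq hr₁0 hr₁ne
  clear hr₁ hr₂ hf f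
  set b : ℝ := α + r₁ + r₂ with hbdef
  set c : ℝ := (β-4) + b*(r₁+r₂) - r₁*r₂ with hcdef

  have hD : r₁ - r₂ ≠ 0 := sub_ne_zero.2 hne
  have hP : r₁ * r₂ ≠ 0 := ne_of_gt (by linarith)
  -- c * (r₁ r₂) = 3
  have hcP : c * (r₁*r₂) = 3 := by
    have h := mul_eq_zero.1 (show (c*(r₁*r₂) - 3) * (r₁ - r₂) = 0 by
      rw [hcdef, hbdef]; linear_combination r₂*hfr₁ - r₁*hfr₂)
    rcases h with h | h
    · linarith [sub_eq_zero.1 h]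
    · exact absurd h hD
  -- Vieta for the linear coefficient
  have hB : b*(r₁*r₂) - c*(r₁+r₂) = -α := by
    have h := mul_eq_zero.1 (show (b*(r₁*r₂) - c*(r₁+r₂) + α) * (r₁-r₂) = 0 by
      rw [hcdef, hbdef]; linear_combination hfr₂ - hfr₁)
    rcases h with h | h
    · linarith
    · exact absurd h hD
  -- the factorization identity over ℝ
  have hfactR : ∀ w : ℝ, w^4 + α*w^3 + (β-4)*w^2 - α*w + 3
      = (w - r₁)*(w - r₂)*(w^2 + b*w + c) := by
    intro w
    rw [hcdef, hbdef] at hB hcP ⊢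
    linear_combination (-w)*hB - hcP
  -- c ∈ (0,1)
  have hPpos : 0 < r₁ * r₂ := by linarith
  have hc1 : 0 < c := by
    by_contra h
    push_neg at h
    have : c * (r₁*r₂) ≤ 0 := mul_nonpos_of_nonpos_of_nonneg h hPpos.le
    rw [hcP] at this; norm_num at this
  have hc2 : c < 1 := by
    by_contra h
    push_neg at h
    have : r₁*r₂ ≤ c * (r₁*r₂) := le_mul_of_one_le_left hPpos.le h
    rw [hcP] at this; linarith
  -- negative discriminant
  have hdisc : b^2 < 4*c := by
    by_contra hcon
    push_neg at hcon
    have he2 : Real.sqrt (b^2 - 4*c) ^ 2 = b^2 - 4*c := Real.sq_sqrt (by linarith)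
    set e : ℝ := Real.sqrt (b^2 - 4*c) with hedef
    have hx : ∀ x : ℝ, x = (-b-e)/2 ∨ x = (-b+e)/2 → x^2 + b*x + c = 0 := by
      rintro x (rfl | rfl) <;> linear_combination (1/4)*he2
    have hxprod : ((-b-e)/2) * ((-b+e)/2) = c := by linear_combination (-1/4)*he2
    have habs : |(-b-e)/2| < 1 ∨ |(-b+e)/2| < 1 := by
      by_contra hc'
      push_neg at hc'
      have h1' := hc'.1
      have h2' := hc'.2
      have : (1:ℝ) ≤ |(-b-e)/2| * |(-b+e)/2| :=
        one_le_mul_of_one_le_of_one_le h1' h2'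
      rw [← abs_mul, hxprod] at this
      rw [abs_of_pos hc1] at this
      linarith
    rcases habs with h | h
    · have := qpos α β ((-b-e)/2) h1 h2 hb1 hb2 (by linarith [(abs_lt.1 h).1]) (by linarith [(abs_lt.1 h).2])
      rw [hfactR ((-b-e)/2)] at this
      rw [hx _ (Or.inl rfl)] at this
      simp at this
    · have := qpos α β ((-b+e)/2) h1 h2 hb1 hb2 (by linarith [(abs_lt.1 h).1]) (by linarith [(abs_lt.1 h).2])
      rw [hfactR ((-b+e)/2)] at this
      rw [hx _ (Or.inr rfl)] at this
      simp at this
  -- the complex root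
  have hd2 : Real.sqrt (4*c - b^2) ^ 2 = 4*c - b^2 := Real.sq_sqrt (by linarith)
  set d : ℝ := Real.sqrt (4*c - b^2) with hddef
  have hdpos : 0 < d := Real.sqrt_pos.2 (by linarith)
  have hbsum : b = α + r₁ + r₂ := hbdef
  have hA : c - b*(r₁+r₂) + r₁*r₂ = β - 4 := by rw [hcdef]; ring
  clear_value b c d
  clear hcdef hddef
  refine ⟨-b/2, -d/2, by linarith, by nlinarith [hd2, hc2], ?_⟩
  set z : ℂ := ((-b/2 : ℝ):ℂ) + ((-d/2 : ℝ):ℂ)*Complex.I with hzdef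
  have hd2C : (d:ℂ)^2 = 4*(c:ℂ) - (b:ℂ)^2 := by exact_mod_cast hd2
  have h1C : z^2 + (b:ℂ)*z + (c:ℂ) = 0 := by
    rw [hzdef]; push_cast
    linear_combination ((d:ℂ)^2/4) * Complex.I_sq - (1/4) * hd2C
  have hbC : (b:ℂ) = (α:ℂ) + (r₁:ℂ) + (r₂:ℂ) := by exact_mod_cast hbsum
  have hAC : (c:ℂ) - (b:ℂ)*((r₁:ℂ)+(r₂:ℂ)) + (r₁:ℂ)*(r₂:ℂ) = (β:ℂ) - 4 := by
    exact_mod_cast hA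
  have hBC : (b:ℂ)*((r₁:ℂ)*(r₂:ℂ)) - (c:ℂ)*((r₁:ℂ)+(r₂:ℂ)) = -(α:ℂ) := by
    exact_mod_cast hB
  have hcPC : (c:ℂ)*((r₁:ℂ)*(r₂:ℂ)) = 3 := by exact_mod_cast hcP
  linear_combination ((z - (r₁:ℂ))*(z - (r₂:ℂ)))*h1C - z^3*hbC - z^2*hAC - z*hBC - hcPC

lemma exists_root_gen (α β : ℝ) (h1 : 4 < α^2) (h2 : α^2 < 6)
    (hb1 : 1/25 < β) (hb2 : β < 33/20) :
    ∃ z : ℂ, ‖z‖ < 1 ∧ z.im < 0 ∧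
      z^4 + (α:ℂ)*z^3 + ((β:ℂ)-4)*z^2 - (α:ℂ)*z + 3 = 0 := by
  have habs : ∀ x y : ℝ, x^2 + y^2 < 1 → ‖(x:ℂ) + (y:ℂ)*Complex.I‖ < 1 := by
    intro x y hxy
    have h := Complex.sq_norm ((x:ℂ) + (y:ℂ)*Complex.I)
    rw [Complex.normSq_add_mul_I] at h
    nlinarith [norm_nonneg ((x:ℂ) + (y:ℂ)*Complex.I)]
  have him : ∀ x y : ℝ, ((x:ℂ) + (y:ℂ)*Complex.I).im = y := by intro x y; simp
  rcases lt_or_ge 0 α with hpos | hneg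
  · have h2' : 2 < α := by nlinarith
    obtain ⟨x, y, hy, hxy, hq⟩ := exists_root_pos α β h2' h2 hb1 hb2
    exact ⟨(x:ℂ) + (y:ℂ)*Complex.I, habs x y hxy, by rw [him x y]; exact hy,
      by linear_combination hq⟩
  · have h2' : 2 < -α := by nlinarith
    obtain ⟨x, y, hy, hxy, hq⟩ := exists_root_pos (-α) β h2' (by nlinarith) hb1 hb2
    refine ⟨((-x : ℝ):ℂ) + (y:ℂ)*Complex.I, habs (-x) y (by nlinarith), 
      by rw [him (-x) y]; exact hy, ?_⟩
    have hconj := congrArg (starRingEnd ℂ) hq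
    simp only [map_add, map_mul, map_pow, map_sub, map_neg, map_ofNat, Complex.conj_ofReal,
      Complex.conj_I, map_zero, map_one] at hconj
    push_cast at hconj ⊢
    linear_combination hconj

lemma aux_prod (ε : ℝ) (hε : 0 ≤ ε) (s : Multiset ℝ) (h : ∀ x ∈ s, ε ≤ x) :
    ε ^ Multiset.card s ≤ s.prod := by
  induction s using Multiset.induction_on with
  | empty => simp
  | cons a t ih =>
    rw [Multiset.prod_cons, Multiset.card_cons, pow_succ']
    exact mul_le_mul (h a (Multiset.mem_cons_self a t))
      (ih fun x hx => h x (Multiset.mem_cons_of_mem hx))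
      (pow_nonneg hε _) (le_trans hε (h a (Multiset.mem_cons_self a t)))

/-- For parameters with `4 < α² < 6` and `4/100 < β < 165/100`, where `α = m/(μM)` and
`β = 6 − l(l+1)/(μ²M²)`, there is `a₀ ∈ (0, M)` such that for all `a ∈ (a₀, M)` the
polynomial `p` has a root in the open lower half-disk. -/
theorem stmt_5 (M μ : ℝ) (m l : ℤ) (n : ℕ) (hM : 0 < M) (hμ : 0 < μ)
    (hm : m ≠ 0) (hl : |m| ≤ l)
    (hα₁ : 4 < (m / (μ * M)) ^ 2) (hα₂ : (m / (μ * M)) ^ 2 < 6)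
    (hβ₁ : 4 / 100 < 6 - (l * (l + 1) : ℤ) / (μ ^ 2 * M ^ 2))
    (hβ₂ : 6 - (l * (l + 1) : ℤ) / (μ ^ 2 * M ^ 2) < 165 / 100) :
    ∃ a₀ : ℝ, a₀ ∈ Set.Ioo 0 M ∧ ∀ a ∈ Set.Ioo a₀ M,
      ∃ w : ℂ, ‖w‖ < 1 ∧ w.im < 0 ∧ p M a μ m l n w = 0 := by
  have hM' : M ≠ 0 := hM.ne'
  set α : ℝ := (m : ℝ) / (μ * M) with hα
  set β : ℝ := 6 - ((l * (l + 1) : ℤ) : ℝ) / (μ ^ 2 * M ^ 2) with hβ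
  obtain ⟨z₀, hz₀abs, hz₀im, hz₀eq⟩ :=
    exists_root_gen α β hα₁ hα₂ (by linarith) (by linarith)
  set ε : ℝ := min (1 - ‖z₀‖) (-z₀.im) with hε
  have hεpos : 0 < ε := lt_min (by linarith) (by linarith)
  -- continuity in a
  have hcont : Continuous fun a : ℝ => p M a μ m l n z₀ := by
    unfold p
    fun_prop
  -- value at a = M
  have hpM : p M M μ m l n z₀ = 0 := by
    have hs : Real.sqrt (1 - M^2/M^2) = 0 := by
      rw [div_self (pow_ne_zero 2 hM'), sub_self, Real.sqrt_zero]
    have key : p M M μ m l n z₀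
        = z₀^4 + (α:ℂ)*z₀^3 + ((β:ℂ)-4)*z₀^2 - (α:ℂ)*z₀ + 3 := by
      unfold p
      rw [hs, hα, hβ]
      push_cast
      have h1 : (M:ℂ) ≠ 0 := Complex.ofReal_ne_zero.mpr hM'
      have h2 : (μ:ℂ) ≠ 0 := Complex.ofReal_ne_zero.mpr hμ.ne'
      field_simp [h1, h2]
      ring
    rw [key]; exact hz₀eq
  -- eventually small
  have htend : Filter.Tendsto (fun a => ‖p M a μ m l n z₀‖)
      (nhdsWithin M (Set.Iio M)) (nhds 0) := by
    have h1 : ContinuousAt (fun a => ‖p M a μ m l n z₀‖) M :=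
      (continuous_norm.comp hcont).continuousAt
    have h2 := h1.continuousWithinAt (s := Set.Iio M)
    have h3 := h2.tendsto
    simpa [hpM] using h3
  have hev : ∀ᶠ a in nhdsWithin M (Set.Iio M),
      ‖p M a μ m l n z₀‖ < ε^4 :=
    htend.eventually_lt_const (by positivity)
  obtain ⟨a₁, ha₁, hsub⟩ := mem_nhdsLT_iff_exists_Ioo_subset.mp hev
  refine ⟨max a₁ (M/2),
    ⟨lt_of_lt_of_le (half_pos hM) (le_max_right _ _), max_lt ha₁ (by linarith)⟩, ?_⟩
  intro a ha
  have haM : a ∈ Set.Ioo a₁ M := ⟨lt_of_le_of_lt (le_max_left _ _) ha.1, ha.2⟩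
  have hsmall : ‖p M a μ m l n z₀‖ < ε^4 := hsub haM
  -- the polynomial
  set K : ℂ := (((m * a / M : ℝ) : ℂ)
      - Complex.I * (((2 * n + 1 : ℝ) * Real.sqrt (1 - a ^ 2 / M ^ 2) : ℝ) : ℂ))
      / ((μ * M : ℝ) : ℂ) with hK
  set c₂ : ℂ := (((2 - (l * (l + 1) : ℤ) / (μ ^ 2 * M ^ 2) : ℝ)) : ℂ) with hc₂
  set c₀ : ℂ := 3 + ((2 * Real.sqrt (1 - a ^ 2 / M ^ 2) : ℝ) : ℂ) with hc₀
  set pp : Polynomial ℂ := Polynomial.X^4 + Polynomial.C K * Polynomial.X^3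
      + Polynomial.C c₂ * Polynomial.X^2 - Polynomial.C K * Polynomial.X
      + Polynomial.C c₀ with hpp
  have heval : ∀ w : ℂ, pp.eval w = p M a μ m l n w := by
    intro w
    rw [hpp]
    simp only [Polynomial.eval_add, Polynomial.eval_sub, Polynomial.eval_mul,
      Polynomial.eval_pow, Polynomial.eval_C, Polynomial.eval_X]
    show _ = p M a μ m l n w
    unfold p
    rw [hK, hc₂, hc₀]
    ring
  have hmon : pp.Monic := by rw [hpp]; monicity!
  have hdeg : pp.natDegree = 4 := by rw [hpp]; compute_degree!
  have hsplits : pp.Splits := IsAlgClosed.splits pp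
  have hcards : Multiset.card pp.roots = 4 := by
    rw [← hdeg]
    exact (Polynomial.splits_iff_card_roots.mp hsplits)
  have hfac := hsplits.eq_prod_roots_of_monic hmon
  have hprodform : ‖pp.eval z₀‖
      = ((pp.roots.map (fun r => ‖z₀ - r‖)).prod) := by
    conv_lhs => rw [hfac]
    rw [Polynomial.eval_multiset_prod, Multiset.map_map]
    rw [show ∀ s : Multiset ℂ, ‖s.prod‖ = (s.map (‖·‖)).prod from fun s => map_multiset_prod normHom s, Multiset.map_map]
    congr 1
    apply Multiset.map_congr rfl
    intro x _
    simp
  have hexists : ∃ r ∈ pp.roots, ‖z₀ - r‖ < ε := by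
    by_contra hno
    push_neg at hno
    have hle : ε ^ 4 ≤ (pp.roots.map (fun r => ‖z₀ - r‖)).prod := by
      have := aux_prod ε hεpos.le (pp.roots.map (fun r => ‖z₀ - r‖)) ?_
      · rwa [Multiset.card_map, hcards] at this
      · intro x hx
        obtain ⟨r, hr, rfl⟩ := Multiset.mem_map.mp hx
        exact hno r hr
    rw [heval z₀] at hprodform
    rw [← hprodform] at hle
    linarith
  obtain ⟨r, hr, hrnear⟩ := hexists
  have hroot : pp.eval r = 0 := (Polynomial.mem_roots'.mp hr).2
  have habs1 : ‖r - z₀‖ = ‖z₀ - r‖ := by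
    rw [norm_sub_rev]
  refine ⟨r, ?_, ?_, ?_⟩
  · have h4 : ‖r‖ ≤ ‖r - z₀‖ + ‖z₀‖ := by
      calc ‖r‖ = ‖(r - z₀) + z₀‖ := by ring_nf
        _ ≤ _ := norm_add_le _ _
    have h5 : ε ≤ 1 - ‖z₀‖ := min_le_left _ _
    rw [habs1] at h4
    linarith
  · have h6 := Complex.abs_im_le_norm (z₀ - r)
    rw [Complex.sub_im] at h6
    have h7 : ε ≤ -z₀.im := min_le_right _ _
    have h8 := neg_abs_le (z₀.im - r.im)
    linarith [abs_nonneg (z₀.im - r.im), le_abs_self (z₀.im - r.im)]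
  · rw [← heval r]
    exact hroot
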